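/- Let Γ be a countable group, let I be a nonempty finite set, let (Γ_i)_{i∈I} be subgroups of Γ, let F ⊆ Γ be a finite set, let δ > 0, and let Γ act freely and measure-preservingly on a standard Borel probability space (X, μ). Suppose that for each i ∈ I there are a finite set J_i, Borel sets (A_{i,j})_{j∈J_i} in X, and finite subsets (T_{i,j})_{j∈J_i} of Γ_i, each containing the neutral element and each (F ∩ Γ_i, δ)-invariant, such that the sets (t·A_{i,j})_{j∈J_i, t∈T_{i,j}} are pairwise disjoint and their union is a conull subset of X. Set E := Γ × I, S := {(γ, i, j) : γ ∈ Γ, i ∈ I, j ∈ J_i}, and W_{(γ,i,j)} := (γ·A_{i,j}) × (γ·T_{i,j}^{−1}) × {i} ⊆ X × Γ × I. For a chain z = Σ_{e ∈ E^{n+1}} a_e·e ∈ ℤ[E^{n+1}] define Φ^δ(z)(x, s) := Σ_{e = (e_0,…,e_n)} a_e · Π_{r=0}^{n} χ_{W_{s_r}}(x, e_r) for x ∈ X and s = (s_0,…,s_n) ∈ S^{n+1}. If every tuple e with a_e ≠ 0 satisfies the F-colouring condition, then Σ_{s ∈ S^{n+1} essential} ∫_X |Φ^δ(z)(x, s)|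 dμ(x) ≤ δ · Σ_{e} |a_e|. -/

import Mathlib

open Pointwise MeasureTheory

open Classical in
/-- A nonempty finite subset `T ⊆ Γ` is `(F', δ)`-invariant if `|F'·T △ T| ≤ δ·|T|`. -/
def IsInvariantSubset {Γ : Type*} [Group Γ] (F' : Finset Γ) (δ : ℝ) (T : Finset Γ) : Prop :=
  T.Nonempty ∧ ((symmDiff (F' * T) T).card : ℝ) ≤ δ * (T.card : ℝ)

/-- The Borel sets
`W_{(γ,i,j)} = (γ • A_{i,j}) × (γ • T_{i,j}⁻¹) × {i} ⊆ X × Γ × I`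
of the Rokhlin partition. -/
def rokhlinSet {X Γ I : Type*} [Group Γ] [MulAction Γ X] {J : I → Type*}
    (A : ∀ i, J i → Set X) (T : ∀ i, J i → Finset Γ)
    (s : Γ × Σ i : I, J i) : Set (X × (Γ × I)) :=
  (s.1 • A s.2.1 s.2.2) ×ˢ ((s.1 • ((T s.2.1 s.2.2 : Set Γ)⁻¹)) ×ˢ ({s.2.1} : Set I))

/-- A tuple `((λ_0,t_0),…,(λ_n,t_n)) ∈ (Γ × I)^{n+1}` satisfies the `F`-colouring
condition if there are `i ∈ I` and `k < l` with `t_k = t_l = i` and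
`λ_k⁻¹λ_l ∈ F ∩ Γ_i`. -/
def FColouring {Γ I : Type*} [Group Γ] (Γi : I → Subgroup Γ) (F : Finset Γ) {n : ℕ}
    (e : Fin (n + 1) → Γ × I) : Prop :=
  ∃ k l : Fin (n + 1), k < l ∧ (e k).2 = (e l).2 ∧
    (e k).1⁻¹ * (e l).1 ∈ F ∧ (e k).1⁻¹ * (e l).1 ∈ Γi ((e k).2)

section Aux

variable {X Γ I : Type*} [Group Γ] [MulAction Γ X] {J : I → Type*}

/-- The fiber `{x | (x, e) ∈ W_s}` of a Rokhlin set over `e ∈ Γ × I`. -/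
def rokhlinFiber (A : ∀ i, J i → Set X) (T : ∀ i, J i → Finset Γ)
    (s : Γ × Σ i : I, J i) (e : Γ × I) : Set X :=
  {x | (x, e) ∈ rokhlinSet A T s}

variable {A : ∀ i, J i → Set X} {T : ∀ i, J i → Finset Γ}

lemma mem_rokhlinSet_iff {x : X} {e : Γ × I} {s : Γ × Σ i : I, J i} :
    (x, e) ∈ rokhlinSet A T s ↔
      ∃ t ∈ T s.2.1 s.2.2, s.1 = e.1 * t ∧ e.2 = s.2.1 ∧
        e.1⁻¹ • x ∈ t • A s.2.1 s.2.2 := by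
  constructor
  · rintro ⟨hx, hlam, hi⟩
    rw [Set.mem_smul_set] at hlam
    obtain ⟨y, hy, hyl⟩ := hlam
    rw [Set.mem_inv, Finset.mem_coe] at hy
    have hs1 : s.1 = e.1 * y⁻¹ := by
      rw [← hyl, smul_eq_mul, mul_inv_cancel_right]
    refine ⟨y⁻¹, hy, hs1, hi, ?_⟩
    rw [hs1, mul_smul, Set.mem_smul_set_iff_inv_smul_mem] at hx
    exact hx
  · rintro ⟨t, ht, hs1, hi, hx⟩
    refine ⟨?_, ?_, hi⟩
    · rw [hs1, mul_smul, Set.mem_smul_set_iff_inv_smul_mem]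
      exact hx
    · rw [Set.mem_smul_set]
      refine ⟨t⁻¹, by rwa [Set.mem_inv, inv_inv, Finset.mem_coe], ?_⟩
      rw [smul_eq_mul, hs1, mul_inv_cancel_right]

lemma mem_rokhlinFiber_iff {x : X} {e : Γ × I} {s : Γ × Σ i : I, J i} :
    x ∈ rokhlinFiber A T s e ↔
      ∃ t ∈ T s.2.1 s.2.2, s.1 = e.1 * t ∧ e.2 = s.2.1 ∧
        e.1⁻¹ • x ∈ t • A s.2.1 s.2.2 :=
  mem_rokhlinSet_iff

/-- For a fixed `x` and `e`, at most one Rokhlin set contains `(x, e)`. -/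
lemma rokhlinFiber_unique
    (hdisj : ∀ (i : I) (j : J i) (t : Γ) (_ : t ∈ T i j) (j' : J i) (t' : Γ)
      (_ : t' ∈ T i j'), (⟨j, t⟩ : J i × Γ) ≠ ⟨j', t'⟩ →
        Disjoint (t • A i j) (t' • A i j'))
    {x : X} {e : Γ × I} {s₁ s₂ : Γ × Σ i : I, J i}
    (h₁ : x ∈ rokhlinFiber A T s₁ e) (h₂ : x ∈ rokhlinFiber A T s₂ e) :
    s₁ = s₂ := by
  rw [mem_rokhlinFiber_iff] at h₁ h₂
  obtain ⟨γ₁, i₁, j₁⟩ := s₁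
  obtain ⟨γ₂, i₂, j₂⟩ := s₂
  obtain ⟨t₁, ht₁, hs₁, hi₁, hx₁⟩ := h₁
  obtain ⟨t₂, ht₂, hs₂, hi₂, hx₂⟩ := h₂
  dsimp only at *
  subst hi₁
  subst hi₂
  have hpair : (⟨j₁, t₁⟩ : J e.2 × Γ) = ⟨j₂, t₂⟩ := by
    by_contra hne
    exact Set.disjoint_left.mp (hdisj e.2 j₁ t₁ ht₁ j₂ t₂ ht₂ hne) hx₁ hx₂
  have hj : j₁ = j₂ := congrArg Prod.fst hpair
  have ht : t₁ = t₂ := congrArg Prod.snd hpair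
  subst hj; subst ht
  simp [hs₁, hs₂]

open Classical in
lemma rokhlinFiber_eq_ite (s : Γ × Σ i : I, J i) (e : Γ × I) :
    rokhlinFiber A T s e =
      if (∃ t ∈ T s.2.1 s.2.2, s.1 = e.1 * t) ∧ e.2 = s.2.1
      then s.1 • A s.2.1 s.2.2 else ∅ := by
  split_ifs with h
  · ext x
    rw [mem_rokhlinFiber_iff]
    constructor
    · rintro ⟨t, ht, hs1, hi, hx⟩
      rw [hs1, mul_smul, Set.mem_smul_set_iff_inv_smul_mem]
      exact hx
    · intro hx
      obtain ⟨⟨t, ht, hs1⟩, hi⟩ := h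
      refine ⟨t, ht, hs1, hi, ?_⟩
      rw [hs1, mul_smul, Set.mem_smul_set_iff_inv_smul_mem] at hx
      exact hx
  · ext x
    rw [mem_rokhlinFiber_iff]
    simp only [Set.mem_empty_iff_false, iff_false]
    rintro ⟨t, ht, hs1, hi, hx⟩
    exact h ⟨⟨t, ht, hs1⟩, hi⟩

open Classical in
/-- The product of indicators over the coordinates of a simplex. -/
noncomputable def rokhlinProd {n : ℕ} (A : ∀ i, J i → Set X) (T : ∀ i, J i → Finset Γ)
    (s : Fin (n + 1) → Γ × Σ i : I, J i) (e : Fin (n + 1) → Γ × I) (x : X) : ENNReal :=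
  ∏ r : Fin (n + 1), (rokhlinFiber A T (s r) (e r)).indicator (fun _ => (1 : ENNReal)) x

end Aux

set_option maxHeartbeats 2000000 in
open Classical in
/-- norm estimate for the Rokhlin chain map. In the Rokhlin
setup, if every tuple in the support of a chain `z ∈ ℤ[E^{n+1}]`, `E = Γ × I`,
satisfies the `F`-colouring condition, then the essential part of `Φ^δ(z)` has
`ℓ¹`-norm at most `δ · |z|₁`. -/
theorem rokhlin_chain_map_norm_estimate
    (Γ : Type*) [Group Γ] [Countable Γ]
    (I : Type*) [Fintype I] [Nonempty I]
    (Γi : I → Subgroup Γ) (F : Finset Γ) (δ : ℝ) (hδ : 0 < δ)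
    (X : Type*) [MeasurableSpace X] [StandardBorelSpace X]
    (μ : Measure X) [IsProbabilityMeasure μ]
    [MulAction Γ X]
    (hmp : ∀ γ : Γ, MeasurePreserving (fun x : X => γ • x) μ μ)
    (hfree : ∀ (γ : Γ) (x : X), γ • x = x → γ = 1)
    -- the Rokhlin partitions for the amenable subgroups `Γ_i`:
    (J : I → Type*) [∀ i, Fintype (J i)]
    (A : ∀ i, J i → Set X) (hAmeas : ∀ i j, MeasurableSet (A i j))
    (T : ∀ i, J i → Finset Γ)
    (hTsub : ∀ i j, ∀ t ∈ T i j, t ∈ Γi i)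
    (hTone : ∀ i j, (1 : Γ) ∈ T i j)
    (hTinv : ∀ i j, IsInvariantSubset (F.filter (fun g => g ∈ Γi i)) δ (T i j))
    (hdisj : ∀ (i : I) (j : J i) (t : Γ) (_ : t ∈ T i j) (j' : J i) (t' : Γ)
      (_ : t' ∈ T i j'), (⟨j, t⟩ : J i × Γ) ≠ ⟨j', t'⟩ →
        Disjoint (t • A i j) (t' • A i j'))
    (hconull : ∀ i : I, μ (⋃ (j : J i), ⋃ (t : Γ) (_ : t ∈ T i j), t • A i j)ᶜ = 0)
    -- the chain `z`, all of whose simplices satisfy the `F`-colouring condition: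
    (n : ℕ) (z : (Fin (n + 1) → Γ × I) →₀ ℤ)
    (hz : ∀ e ∈ z.support, FColouring Γi F e) :
    -- `∑_{s ∈ S^{n+1} essential} ∫_X |Φ^δ(z)(x, s)| dμ(x) ≤ δ · ∑_e |a_e|`
    (∑' s : {s : Fin (n + 1) → Γ × Σ i : I, J i // Function.Injective s},
        ∫⁻ x : X,
          (((z.sum fun e a => a * ∏ r : Fin (n + 1),
              (rokhlinSet A T (s.1 r)).indicator (fun _ => (1 : ℤ)) (x, e r)).natAbs :
            ℕ) : ENNReal) ∂μ) ≤
      ENNReal.ofReal δ * ∑ e ∈ z.support, ((z e).natAbs : ENNReal) := by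
  -- smul of measurable sets is measurable, with the same measure
  have hpre : ∀ (γ : Γ) (B : Set X), γ • B = (fun x : X => γ⁻¹ • x) ⁻¹' B := by
    intro γ B
    ext x
    simp [Set.mem_smul_set_iff_inv_smul_mem]
  have hsmulmeas : ∀ (γ : Γ) (B : Set X), MeasurableSet B → MeasurableSet (γ • B) := by
    intro γ B hB
    rw [hpre]
    exact (hmp γ⁻¹).measurable hB
  have hsmul_measure : ∀ (γ : Γ) (B : Set X), MeasurableSet B → μ (γ • B) = μ B := by
    intro γ B hB
    rw [hpre]
    exact (hmp γ⁻¹).measure_preimage hB.nullMeasurableSet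
  -- measurability of the fibers
  have hfibmeas : ∀ (s : Γ × Σ i : I, J i) (e : Γ × I), MeasurableSet (rokhlinFiber A T s e) := by
    intro s e
    rw [rokhlinFiber_eq_ite]
    split_ifs with h
    · exact hsmulmeas _ _ (hAmeas _ _)
    · exact MeasurableSet.empty
  -- the product of indicators, as an `ℝ≥0∞`-valued function
  let G : (Fin (n + 1) → Γ × Σ i : I, J i) → (Fin (n + 1) → Γ × I) → X → ENNReal :=
    rokhlinProd A T
  have hGmeas : ∀ (s : Fin (n + 1) → Γ × Σ i : I, J i) (e : Fin (n + 1) → Γ × I),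
      Measurable (G s e) := by
    intro s e
    exact Finset.measurable_prod _ fun r _ =>
      Measurable.indicator measurable_const (hfibmeas (s r) (e r))
  have hGle1 : ∀ s e x, G s e x ≤ 1 := by
    intro s e x
    refine Finset.prod_le_one (fun r _ => zero_le) (fun r _ => ?_)
    by_cases h : x ∈ rokhlinFiber A T (s r) (e r) <;> simp [h]
  have hGmem : ∀ (s : Fin (n + 1) → Γ × Σ i : I, J i) (e : Fin (n + 1) → Γ × I) (x : X),
      G s e x ≠ 0 → ∀ r, x ∈ rokhlinFiber A T (s r) (e r) := by
    intro s e x hne r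
    by_contra hmem
    exact hne (Finset.prod_eq_zero (Finset.mem_univ r)
      (Set.indicator_of_notMem hmem _))
  -- pointwise bound on the integrand
  have hterm : ∀ (s : Fin (n + 1) → Γ × Σ i : I, J i) (x : X) (e : Fin (n + 1) → Γ × I) (a : ℤ),
      (((a * ∏ r : Fin (n + 1),
          (rokhlinSet A T (s r)).indicator (fun _ => (1 : ℤ)) (x, e r)).natAbs : ℕ) :
        ENNReal) ≤ (a.natAbs : ENNReal) * G s e x := by
    intro s x e a
    by_cases h : ∀ r, (x, e r) ∈ rokhlinSet A T (s r)
    · have h1 : (∏ r : Fin (n + 1),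
          (rokhlinSet A T (s r)).indicator (fun _ => (1 : ℤ)) (x, e r)) = 1 :=
        Finset.prod_eq_one fun r _ => Set.indicator_of_mem (h r) _
      have h2 : G s e x = 1 :=
        Finset.prod_eq_one fun r _ => Set.indicator_of_mem
          (show x ∈ rokhlinFiber A T (s r) (e r) from h r) _
      rw [h1, h2, mul_one, mul_one]
    · push_neg at h
      obtain ⟨r, hr⟩ := h
      have h1 : (∏ r : Fin (n + 1),
          (rokhlinSet A T (s r)).indicator (fun _ => (1 : ℤ)) (x, e r)) = 0 :=
        Finset.prod_eq_zero (Finset.mem_univ r) (Set.indicator_of_notMem hr _)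
      rw [h1, mul_zero]
      simp
  have hpoint : ∀ (s : Fin (n + 1) → Γ × Σ i : I, J i) (x : X),
      (((z.sum fun e a => a * ∏ r : Fin (n + 1),
          (rokhlinSet A T (s r)).indicator (fun _ => (1 : ℤ)) (x, e r)).natAbs : ℕ) :
        ENNReal) ≤
        ∑ e ∈ z.support, ((z e).natAbs : ENNReal) * G s e x := by
    intro s x
    rw [Finsupp.sum]
    calc (((∑ e ∈ z.support, z e * ∏ r : Fin (n + 1),
            (rokhlinSet A T (s r)).indicator (fun _ => (1 : ℤ)) (x, e r)).natAbs : ℕ) :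
          ENNReal)
        ≤ ((∑ e ∈ z.support, (z e * ∏ r : Fin (n + 1),
            (rokhlinSet A T (s r)).indicator (fun _ => (1 : ℤ)) (x, e r)).natAbs : ℕ) :
          ENNReal) := by
          exact_mod_cast Nat.cast_le.mpr (nat_abs_sum_le _ _)
      _ = ∑ e ∈ z.support, (((z e * ∏ r : Fin (n + 1),
            (rokhlinSet A T (s r)).indicator (fun _ => (1 : ℤ)) (x, e r)).natAbs : ℕ) :
          ENNReal) := by push_cast; rfl
      _ ≤ ∑ e ∈ z.support, ((z e).natAbs : ENNReal) * G s e x :=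
          Finset.sum_le_sum fun e _ => hterm s x e (z e)
  -- the key estimate, for a single `e` satisfying the colouring condition
  have key : ∀ e : Fin (n + 1) → Γ × I, FColouring Γi F e →
      (∑' s : {s : Fin (n + 1) → Γ × Σ i : I, J i // Function.Injective s},
        ∫⁻ x, G s.1 e x ∂μ) ≤ ENNReal.ofReal δ := by
    intro e hcol
    obtain ⟨k, l, hkl, hil, hgF, hgΓ⟩ := hcol
    set i := (e k).2 with hi_def
    set g := (e k).1⁻¹ * (e l).1 with hg_def
    set D : J i → Finset Γ := fun j => (T i j).filter (fun t => g * t ∉ T i j) with hD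
    set U : Set X := ⋃ j : J i, ⋃ t ∈ D j, ((e l).1 * t) • A i j with hU
    have hUmeas : MeasurableSet U := by
      refine MeasurableSet.iUnion fun j => (D j).measurableSet_biUnion fun t _ =>
        hsmulmeas _ _ (hAmeas _ _)
    -- pointwise: the essential sum is bounded by the indicator of `U`
    have hpt : ∀ x : X,
        (∑' s : {s : Fin (n + 1) → Γ × Σ i : I, J i // Function.Injective s}, G s.1 e x) ≤
          U.indicator 1 x := by
      intro x
      by_cases hxU : x ∈ U
      · rw [Set.indicator_of_mem hxU]
        simp only [Pi.one_apply]
        by_cases hex : ∃ s : {s : Fin (n + 1) → Γ × Σ i : I, J i // Function.Injective s}, G s.1 e x ≠ 0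
        · obtain ⟨s₀, hs₀⟩ := hex
          calc (∑' s : {s : Fin (n + 1) → Γ × Σ i : I, J i // Function.Injective s}, G s.1 e x)
              ≤ ∑' s : {s : Fin (n + 1) → Γ × Σ i : I, J i // Function.Injective s},
                  (if s = s₀ then (1 : ENNReal) else 0) := by
                refine ENNReal.tsum_le_tsum fun s : {s : Fin (n + 1) → Γ × Σ i : I, J i // Function.Injective s} => ?_
                by_cases hss : s = s₀
                · rw [if_pos hss]
                  exact hGle1 _ _ _
                · rw [if_neg hss]
                  by_contra hne
                  push_neg at hne
                  have hGne : G s.1 e x ≠ 0 := by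
                    intro h0
                    rw [h0] at hne
                    exact (lt_irrefl _ hne).elim
                  have hm := hGmem s.1 e x hGne
                  have hm₀ := hGmem s₀.1 e x hs₀
                  exact hss (Subtype.ext (funext fun r =>
                    rokhlinFiber_unique hdisj (hm r) (hm₀ r)))
            _ = 1 := tsum_ite_eq s₀ 1
        · push_neg at hex
          rw [ENNReal.tsum_eq_zero.mpr hex]
          exact zero_le_one
      · rw [Set.indicator_of_notMem hxU]
        refine le_of_eq (ENNReal.tsum_eq_zero.mpr fun s : {s : Fin (n + 1) → Γ × Σ i : I, J i // Function.Injective s} => ?_)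
        by_contra hne
        have hm := hGmem s.1 e x hne
        -- unpack the membership at position `l`
        have hl := hm l
        rw [mem_rokhlinFiber_iff] at hl
        rcases hsl : s.1 l with ⟨γ', σ'⟩
        rcases hσ : σ' with ⟨i', j'⟩
        rw [hsl, hσ] at hl
        obtain ⟨t', ht', hs1', hi', hx'⟩ := hl
        dsimp only at ht' hs1' hi' hx'
        have hii : i' = i := hi'.symm.trans hil.symm
        subst hii
        -- `g * t'` must lie in `T i j'`, otherwise `x ∈ U`
        by_cases hgt : g * t' ∈ T i j'
        · -- then the unique Rokhlin set for `e k` coincides with the one for `e l`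
          have hs' : x ∈ rokhlinFiber A T ((e k).1 * (g * t'), ⟨i, j'⟩) (e k) := by
            rw [mem_rokhlinFiber_iff]
            refine ⟨g * t', hgt, rfl, rfl, ?_⟩
            have hsm : (e k).1⁻¹ • x = g • ((e l).1⁻¹ • x) := by
              rw [smul_smul, hg_def]
              congr 1
              group
            rw [hsm, mul_smul]
            exact Set.smul_mem_smul_set hx'
          have heqk : s.1 k = ((e k).1 * (g * t'), ⟨i, j'⟩) :=
            rokhlinFiber_unique hdisj (hm k) hs'
          have heql : ((e k).1 * (g * t'), (⟨i, j'⟩ : Σ i : I, J i)) = s.1 l := by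
            rw [hsl, hσ]
            refine Prod.ext ?_ rfl
            show (e k).1 * (g * t') = γ'
            rw [hs1', hg_def]
            group
          have : k = l := s.2 (heqk.trans heql)
          exact absurd this hkl.ne
        · -- otherwise `x ∈ U`, contradiction
          apply hxU
          rw [hU]
          refine Set.mem_iUnion.mpr ⟨j', Set.mem_iUnion₂.mpr ⟨t', ?_, ?_⟩⟩
          · rw [hD]
            exact Finset.mem_filter.mpr ⟨ht', hgt⟩
          · rw [mul_smul, Set.mem_smul_set_iff_inv_smul_mem]
            exact hx'
    -- the measure of `U` is at most `δ`
    have hgF' : g ∈ F.filter (fun g => g ∈ Γi i) := by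
      refine Finset.mem_filter.mpr ⟨hgF, ?_⟩
      exact hgΓ
    have hcard : ∀ j : J i, ((D j).card : ENNReal) ≤
        ENNReal.ofReal δ * ((T i j).card : ENNReal) := by
      intro j
      have hinj : (D j).card ≤
          (symmDiff ((F.filter (fun g => g ∈ Γi i)) * T i j) (T i j)).card := by
        refine Finset.card_le_card_of_injOn (fun t => g * t) ?_ ?_
        · intro t htD
          rw [hD] at htD
          obtain ⟨htT, hgt⟩ := Finset.mem_filter.mp htD
          exact Finset.mem_symmDiff.mpr (Or.inl ⟨Finset.mul_mem_mul hgF' htT, hgt⟩)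
        · intro a _ b _ hab
          exact mul_left_cancel hab
      have hreal : ((D j).card : ℝ) ≤ δ * ((T i j).card : ℝ) :=
        le_trans (Nat.cast_le.mpr hinj) (hTinv i j).2
      calc ((D j).card : ENNReal) = ENNReal.ofReal ((D j).card : ℝ) := by
            rw [ENNReal.ofReal_natCast]
        _ ≤ ENNReal.ofReal (δ * ((T i j).card : ℝ)) := ENNReal.ofReal_le_ofReal hreal
        _ = ENNReal.ofReal δ * ((T i j).card : ENNReal) := by
            rw [ENNReal.ofReal_mul hδ.le, ENNReal.ofReal_natCast]
    have htotal : (∑ j : J i, ((T i j).card : ENNReal) * μ (A i j)) ≤ 1 := by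
      classical
      set K : Finset ((_ : J i) × Γ) := Finset.univ.sigma (fun j => T i j) with hK
      have hdisjK : (↑K : Set ((_ : J i) × Γ)).PairwiseDisjoint
          (fun p => p.2 • A i p.1) := by
        intro p hp q hq hne
        simp only [hK, Finset.coe_sigma, Set.mem_sigma_iff, Finset.mem_coe] at hp hq
        refine hdisj i p.1 p.2 ?_ q.1 q.2 ?_ ?_
        · exact hp.2
        · exact hq.2
        · intro hpq
          apply hne
          have h1 : p.1 = q.1 := congrArg Prod.fst hpq
          have h2 : p.2 = q.2 := congrArg Prod.snd hpq
          exact Sigma.ext h1 (heq_of_eq h2)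
      have hemeas : ∀ p ∈ K, MeasurableSet (p.2 • A i p.1) := fun p _ =>
        hsmulmeas _ _ (hAmeas _ _)
      calc (∑ j : J i, ((T i j).card : ENNReal) * μ (A i j))
          = ∑ j : J i, ∑ t ∈ T i j, μ (t • A i j) := by
            refine Finset.sum_congr rfl fun j _ => ?_
            rw [Finset.sum_congr rfl fun t _ => hsmul_measure t (A i j) (hAmeas i j),
              Finset.sum_const, nsmul_eq_mul]
        _ = ∑ p ∈ K, μ (p.2 • A i p.1) := by
            rw [hK, Finset.sum_sigma]
        _ = μ (⋃ p ∈ K, p.2 • A i p.1) := (measure_biUnion_finset hdisjK hemeas).symm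
        _ ≤ μ Set.univ := measure_mono (Set.subset_univ _)
        _ = 1 := measure_univ
    have hmuU : μ U ≤ ENNReal.ofReal δ := by
      calc μ U ≤ ∑' j : J i, μ (⋃ t ∈ D j, ((e l).1 * t) • A i j) :=
            measure_iUnion_le _
        _ = ∑ j : J i, μ (⋃ t ∈ D j, ((e l).1 * t) • A i j) := tsum_fintype _
        _ ≤ ∑ j : J i, ∑ t ∈ D j, μ (((e l).1 * t) • A i j) :=
            Finset.sum_le_sum fun j _ => measure_biUnion_finset_le _ _
        _ = ∑ j : J i, ((D j).card : ENNReal) * μ (A i j) := by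
            refine Finset.sum_congr rfl fun j _ => ?_
            rw [Finset.sum_congr rfl fun t _ =>
              hsmul_measure ((e l).1 * t) (A i j) (hAmeas i j),
              Finset.sum_const, nsmul_eq_mul]
        _ ≤ ∑ j : J i, (ENNReal.ofReal δ * ((T i j).card : ENNReal)) * μ (A i j) :=
            Finset.sum_le_sum fun j _ => mul_le_mul_left (hcard j) _
        _ = ENNReal.ofReal δ * ∑ j : J i, ((T i j).card : ENNReal) * μ (A i j) := by
            rw [Finset.mul_sum]
            exact Finset.sum_congr rfl fun j _ => by rw [mul_assoc]
        _ ≤ ENNReal.ofReal δ * 1 := mul_le_mul_right htotal _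
        _ = ENNReal.ofReal δ := mul_one _
    calc (∑' s : {s : Fin (n + 1) → Γ × Σ i : I, J i // Function.Injective s}, ∫⁻ x, G s.1 e x ∂μ)
        = ∫⁻ x, (∑' s : {s : Fin (n + 1) → Γ × Σ i : I, J i // Function.Injective s}, G s.1 e x) ∂μ :=
          (lintegral_tsum fun s : {s : Fin (n + 1) → Γ × Σ i : I, J i // Function.Injective s} => (hGmeas s.1 e).aemeasurable).symm
      _ ≤ ∫⁻ x, U.indicator 1 x ∂μ := lintegral_mono hpt
      _ = μ U := lintegral_indicator_one hUmeas
      _ ≤ ENNReal.ofReal δ := hmuU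
  -- putting everything together
  calc (∑' s : {s : Fin (n + 1) → Γ × Σ i : I, J i // Function.Injective s},
        ∫⁻ x : X,
          (((z.sum fun e a => a * ∏ r : Fin (n + 1),
              (rokhlinSet A T (s.1 r)).indicator (fun _ => (1 : ℤ)) (x, e r)).natAbs :
            ℕ) : ENNReal) ∂μ)
      ≤ ∑' s : {s : Fin (n + 1) → Γ × Σ i : I, J i // Function.Injective s},
          ∫⁻ x : X, ∑ e ∈ z.support, ((z e).natAbs : ENNReal) * G s.1 e x ∂μ :=
        ENNReal.tsum_le_tsum fun s : {s : Fin (n + 1) → Γ × Σ i : I, J i // Function.Injective s} => lintegral_mono fun x => hpoint s.1 x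
    _ = ∑' s : {s : Fin (n + 1) → Γ × Σ i : I, J i // Function.Injective s},
          ∑ e ∈ z.support, ((z e).natAbs : ENNReal) * ∫⁻ x, G s.1 e x ∂μ := by
        refine tsum_congr fun s : {s : Fin (n + 1) → Γ × Σ i : I, J i // Function.Injective s} => ?_
        rw [lintegral_finset_sum _ fun e _ => (hGmeas s.1 e).const_mul _]
        exact Finset.sum_congr rfl fun e _ => lintegral_const_mul _ (hGmeas s.1 e)
    _ = ∑ e ∈ z.support, ∑' s : {s : Fin (n + 1) → Γ × Σ i : I, J i // Function.Injective s},
          ((z e).natAbs : ENNReal) * ∫⁻ x, G s.1 e x ∂μ :=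
        Summable.tsum_finsetSum fun e _ => ENNReal.summable
    _ ≤ ∑ e ∈ z.support, ((z e).natAbs : ENNReal) * ENNReal.ofReal δ := by
        refine Finset.sum_le_sum fun e he => ?_
        rw [ENNReal.tsum_mul_left]
        exact mul_le_mul_right (key e (hz e he)) _
    _ = ENNReal.ofReal δ * ∑ e ∈ z.support, ((z e).natAbs : ENNReal) := by
        rw [← Finset.sum_mul, mul_comm]
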